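/- arXiv:2102.11431 — 4 statements merged into one kernel-verified Lean document; each statement's English description precedes it below -/
import Mathlib

section
/- Let f, g : (0,∞) → [0,∞] be nonincreasing measurable functions. Then for every t > 0 one has ∫₀ᵗ (∫ₛ^∞ f(r) g(r) dr) ds ≤ (∫₀ᵗ f(s) ds)·(∫₀ᵗ g(s) ds) + t·∫ₜ^∞ f(s) g(s) ds (with values in [0,∞]). -/
open MeasureTheory Set Function
open scoped ENNReal

noncomputable section

/-- The nonincreasing rearrangement of `f` with respect to the measure `μ`:
`f*(t) = inf {λ > 0 : μ{x : f x > λ} ≤ t}`. -/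
def rearr {α : Type*} [MeasurableSpace α] (μ : Measure α) (f : α → ℝ≥0∞) (t : ℝ) : ℝ≥0∞ :=
  sInf {l : ℝ≥0∞ | 0 < l ∧ μ {x | l < f x} ≤ ENNReal.ofReal t}

/-- Lebesgue measure restricted to `(0,∞)`. -/
def mP : Measure ℝ := volume.restrict (Ioi 0)

/-- The nonincreasing rearrangement of a function on `(0,∞)`. -/
def rearrP (f : ℝ → ℝ≥0∞) : ℝ → ℝ≥0∞ := rearr mP f

/-- Application of a real function (e.g. an N-function) to an extended nonnegative
real number, sending `∞` to `∞`. -/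
def appE (Φ : ℝ → ℝ) (x : ℝ≥0∞) : ℝ≥0∞ :=
  if x = ∞ then ∞ else ENNReal.ofReal (Φ x.toReal)

/-- Generalized inverse of an increasing function on `[0,∞)`. -/
def nInv (Φ : ℝ → ℝ) (v : ℝ) : ℝ :=
  sInf {x : ℝ | 0 ≤ x ∧ v ≤ Φ x}

/-- The generalized inverse, extended to `ℝ≥0∞`. -/
def nInvE (Φ : ℝ → ℝ) (v : ℝ≥0∞) : ℝ≥0∞ :=
  if v = ∞ then ∞ else ENNReal.ofReal (nInv Φ v.toReal)

/-- `Φ` is the N-function `Φ(x) = ∫₀ˣ φ`, where `φ : (0,∞) → (0,∞)` is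
nondecreasing and onto `(0,∞)`. -/
def IsNFunctionWith (φ Φ : ℝ → ℝ) : Prop :=
  MonotoneOn φ (Ioi 0) ∧ (∀ y > 0, 0 < φ y) ∧ (∀ s > 0, ∃ y > 0, φ y = s) ∧
    ∀ x : ℝ, Φ x = ∫ y in Ioc 0 x, φ y

/-- `Φ` is an N-function. -/
def IsNFunction (Φ : ℝ → ℝ) : Prop := ∃ φ, IsNFunctionWith φ Φ

/-- `Φ` and `Ψ` are complementary N-functions: `Φ(x) = ∫₀ˣ φ` and `Ψ(t) = ∫₀ᵗ φ⁻¹`,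
where `φ⁻¹(s) = inf {y > 0 : φ y ≥ s}`. -/
def IsNPair (Φ Ψ : ℝ → ℝ) : Prop :=
  ∃ φ, IsNFunctionWith φ Φ ∧
    ∀ t : ℝ, Ψ t = ∫ s in Ioc 0 t, sInf {y : ℝ | 0 < y ∧ s ≤ φ y}

/-- `Φ(2t) ≈ Φ(t)` for `t ≫ 1`. -/
def Delta2AtInfty (Φ : ℝ → ℝ) : Prop :=
  ∃ c > (0:ℝ), ∃ T > (0:ℝ), ∀ t ≥ T, Φ (2 * t) ≤ c * Φ t

/-- A weight: a nonnegative locally integrable function on `(0,∞)`. -/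
def IsWeight (u : ℝ → ℝ) : Prop :=
  (∀ x ∈ Ioi (0:ℝ), 0 ≤ u x) ∧ LocallyIntegrableOn u (Ioi 0)

/-- The weighted Orlicz gauge norm `ρ_{Φ,u}` on `(0,∞)`. -/
def gaugeW (Φ : ℝ → ℝ) (u : ℝ → ℝ) (f : ℝ → ℝ≥0∞) : ℝ≥0∞ :=
  sInf {l : ℝ≥0∞ | 0 < l ∧
    ∫⁻ x in Ioi (0:ℝ), appE Φ (f x / l) * ENNReal.ofReal (u x) ≤ 1}

/-- The unweighted Orlicz gauge norm `ρ_Φ` on `(0,∞)`. -/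
def gaugeP (Φ : ℝ → ℝ) (f : ℝ → ℝ≥0∞) : ℝ≥0∞ :=
  sInf {l : ℝ≥0∞ | 0 < l ∧ ∫⁻ x in Ioi (0:ℝ), appE Φ (f x / l) ≤ 1}

/-- The unweighted Orlicz gauge norm `ρ_Φ` on `ℝⁿ`. -/
def gaugeE {n : ℕ} (Φ : ℝ → ℝ) (f : EuclideanSpace ℝ (Fin n) → ℝ≥0∞) : ℝ≥0∞ :=
  sInf {l : ℝ≥0∞ | 0 < l ∧ ∫⁻ x, appE Φ (f x / l) ≤ 1}

/-- Convolution of nonnegative functions on `ℝⁿ`. -/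
def conv {n : ℕ} (f g : EuclideanSpace ℝ (Fin n) → ℝ≥0∞)
    (x : EuclideanSpace ℝ (Fin n)) : ℝ≥0∞ :=
  ∫⁻ y, f (x - y) * g y

/-- The integral operator with kernel `K` on `(0,∞)`. -/
def TK (K : ℝ → ℝ → ℝ≥0∞) (f : ℝ → ℝ≥0∞) (x : ℝ) : ℝ≥0∞ :=
  ∫⁻ y in Ioi (0:ℝ), K x y * f y

/-- The iterated rearrangement `L = (K^{*₂})^{*₁}` of a kernel on `(0,∞)²`:
first rearrange `y ↦ K x y` for fixed `x`, then rearrange the result in `x`. -/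
def iterRearr (K : ℝ → ℝ → ℝ≥0∞) (t s : ℝ) : ℝ≥0∞ :=
  rearrP (fun x => rearrP (K x) s) t


/-- for nonincreasing `f, g : (0,∞) → [0,∞]` and every `t > 0`,
`∫₀ᵗ (∫ₛ^∞ f g) ds ≤ (∫₀ᵗ f)(∫₀ᵗ g) + t ∫ₜ^∞ f g`. -/
theorem statement_0 (f g : ℝ → ℝ≥0∞) (hf : Measurable f) (hg : Measurable g)
    (hfa : AntitoneOn f (Ioi 0)) (hga : AntitoneOn g (Ioi 0)) (t : ℝ) (ht : 0 < t) :
    ∫⁻ s in Ioc (0:ℝ) t, ∫⁻ r in Ioi s, f r * g r ≤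
      (∫⁻ s in Ioc (0:ℝ) t, f s) * (∫⁻ s in Ioc (0:ℝ) t, g s) +
        ENNReal.ofReal t * ∫⁻ s in Ioi t, f s * g s := by
  set C := ∫⁻ s in Ioc (0:ℝ) t, f s with hC
  set D := ∫⁻ s in Ioi t, f s * g s with hD
  have key : ∀ s ∈ Ioc (0:ℝ) t, (∫⁻ r in Ioi s, f r * g r) ≤ g s * C + D := by
    intro s hs
    have hsplit : (Ioi s : Set ℝ) = Ioc s t ∪ Ioi t := (Ioc_union_Ioi_eq_Ioi hs.2).symm
    rw [hsplit, lintegral_union measurableSet_Ioi (Ioc_disjoint_Ioi le_rfl)]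
    refine add_le_add ?_ le_rfl
    calc ∫⁻ r in Ioc s t, f r * g r
        ≤ ∫⁻ r in Ioc s t, g s * f r := by
          refine setLIntegral_mono (hf.const_mul _) fun r hr => ?_
          rw [mul_comm]
          exact mul_le_mul_left (hga hs.1 (hs.1.trans hr.1) hr.1.le) _
      _ = g s * ∫⁻ r in Ioc s t, f r := lintegral_const_mul _ hf
      _ ≤ g s * C := by
          refine mul_le_mul_right (lintegral_mono_set ?_) _
          exact Ioc_subset_Ioc_left hs.1.le
  calc ∫⁻ s in Ioc (0:ℝ) t, ∫⁻ r in Ioi s, f r * g r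
      ≤ ∫⁻ s in Ioc (0:ℝ) t, (g s * C + D) := setLIntegral_mono' measurableSet_Ioc key
    _ = (∫⁻ s in Ioc (0:ℝ) t, g s * C) + D * volume (Ioc (0:ℝ) t) := by
        rw [lintegral_add_right _ measurable_const, setLIntegral_const]
    _ = C * (∫⁻ s in Ioc (0:ℝ) t, g s) + ENNReal.ofReal t * D := by
        rw [Real.volume_Ioc, sub_zero, mul_comm D]
        congr 1
        rw [mul_comm]
        exact lintegral_mul_const _ hg

end
end

section
/- Let K ∈ M₊(ℝ₊²) and let L = (K^{*₂})^{*₁} be its iterated rearrangement. Then for every f ∈ M₊(ℝ₊) and every t > 0, ∫₀ᵗ (T_K f)*(s) ds ≤ ∫₀ᵗ (T_L f*)(s) ds; equivalently, (T_K f)**(t) ≤ (T_L f*)**(t) for all t > 0, where h**(t) = t⁻¹∫₀ᵗ h*. -/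
open MeasureTheory Set Function
open scoped ENNReal

noncomputable section

/-! ### Auxiliary lemmas for Statement 10 -/

section Stmt10Aux

open scoped ENNReal

instance : SigmaFinite mP := by unfold mP; infer_instance

lemma mP_apply (S : Set ℝ) : mP S = volume (S ∩ Ioi 0) :=
  Measure.restrict_apply' measurableSet_Ioi

/-- The measure of `{s > 0 : ofReal s < D}` is `D`. -/
lemma vol_lt_ofReal (D : ℝ≥0∞) :
    volume ({s : ℝ | ENNReal.ofReal s < D} ∩ Ioi 0) = D := by
  rcases eq_or_ne D ∞ with rfl | hD
  · have h : {s : ℝ | ENNReal.ofReal s < ∞} ∩ Ioi 0 = Ioi 0 := by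
      ext s; simp [ENNReal.ofReal_lt_top]
    rw [h, Real.volume_Ioi]
  · have h : {s : ℝ | ENNReal.ofReal s < D} ∩ Ioi 0 = Ioo 0 D.toReal := by
      ext s
      simp only [mem_inter_iff, mem_setOf_eq, mem_Ioi, mem_Ioo]
      constructor
      · rintro ⟨h1, h2⟩; exact ⟨h2, (ENNReal.ofReal_lt_iff_lt_toReal h2.le hD).mp h1⟩
      · rintro ⟨h2, h1⟩; exact ⟨(ENNReal.ofReal_lt_iff_lt_toReal h2.le hD).mpr h1, h2⟩
    rw [h, Real.volume_Ioo, sub_zero, ENNReal.ofReal_toReal hD]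

/-- Layer cake formula for the Lebesgue integral. -/
lemma layercake {α : Type*} [MeasurableSpace α] (μ : Measure α) [SFinite μ]
    {g : α → ℝ≥0∞} (hg : Measurable g) :
    ∫⁻ x, g x ∂μ = ∫⁻ l in Ioi (0:ℝ), μ {x | ENNReal.ofReal l < g x} := by
  have hms : MeasurableSet {p : α × ℝ | ENNReal.ofReal p.2 < g p.1} :=
    measurableSet_lt (ENNReal.measurable_ofReal.comp measurable_snd) (hg.comp measurable_fst)
  have hmeas : Measurable fun p : α × ℝ =>
      (if ENNReal.ofReal p.2 < g p.1 then (1:ℝ≥0∞) else 0) :=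
    Measurable.ite hms measurable_const measurable_const
  have step1 : ∀ x, g x
      = ∫⁻ l in Ioi (0:ℝ), (if ENNReal.ofReal l < g x then (1:ℝ≥0∞) else 0) := by
    intro x
    have h1 : (fun l : ℝ => (if ENNReal.ofReal l < g x then (1:ℝ≥0∞) else 0))
        = {l : ℝ | ENNReal.ofReal l < g x}.indicator (fun _ => (1:ℝ≥0∞)) := by
      ext l; simp [Set.indicator_apply, Set.mem_setOf_eq]
    have hls : MeasurableSet {l : ℝ | ENNReal.ofReal l < g x} :=
      measurableSet_lt ENNReal.measurable_ofReal measurable_const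
    rw [h1, lintegral_indicator hls, setLIntegral_one]
    exact ((Measure.restrict_apply' (show MeasurableSet (Ioi (0:ℝ)) from
      measurableSet_Ioi)).trans (vol_lt_ofReal (g x))).symm
  calc ∫⁻ x, g x ∂μ
      = ∫⁻ x, (∫⁻ l in Ioi (0:ℝ), (if ENNReal.ofReal l < g x then (1:ℝ≥0∞) else 0)) ∂μ :=
        lintegral_congr step1
    _ = ∫⁻ l in Ioi (0:ℝ), ∫⁻ x, (if ENNReal.ofReal l < g x then (1:ℝ≥0∞) else 0) ∂μ :=
        lintegral_lintegral_swap hmeas.aemeasurable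
    _ = ∫⁻ l in Ioi (0:ℝ), μ {x | ENNReal.ofReal l < g x} := by
        refine lintegral_congr fun l => ?_
        have h1 : (fun x => (if ENNReal.ofReal l < g x then (1:ℝ≥0∞) else 0))
            = {x | ENNReal.ofReal l < g x}.indicator (fun _ => (1:ℝ≥0∞)) := by
          ext x; simp [Set.indicator_apply, Set.mem_setOf_eq]
        rw [h1, lintegral_indicator (show MeasurableSet {x | ENNReal.ofReal l < g x}
          from hg measurableSet_Ioi), setLIntegral_one]

/-- The key characterization: `l < f*(s)` iff `ofReal s < μ{f > l}`. -/
lemma lt_rearr_iff {α : Type*} [MeasurableSpace α] {μ : Measure α} {g : α → ℝ≥0∞}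
    (hg : Measurable g) {l : ℝ≥0∞} (hl0 : 0 < l) (hlt : l ≠ ∞) (s : ℝ) :
    l < rearr μ g s ↔ ENNReal.ofReal s < μ {x | l < g x} := by
  constructor
  · intro h
    by_contra hc
    push_neg at hc
    exact absurd (sInf_le (show l ∈ {l : ℝ≥0∞ | 0 < l ∧ μ {x | l < g x} ≤ ENNReal.ofReal s}
      from ⟨hl0, hc⟩)) (not_le.mpr h)
  · intro h
    by_contra hc
    push_neg at hc
    have key : {x | l < g x}
        = ⋃ q : {q : ℚ | l < ENNReal.ofReal (q:ℝ)}, {x | ENNReal.ofReal ((q:ℚ):ℝ) < g x} := by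
      ext x
      simp only [mem_setOf_eq, mem_iUnion]
      constructor
      · intro hx
        obtain ⟨q, _, h1, h2⟩ := ENNReal.lt_iff_exists_rat_btwn.mp hx
        exact ⟨⟨q, h1⟩, h2⟩
      · rintro ⟨⟨q, hq⟩, hx⟩
        exact lt_trans hq hx
    have hdir : Directed (· ⊆ ·) fun q : {q : ℚ | l < ENNReal.ofReal (q:ℝ)} =>
        {x | ENNReal.ofReal ((q:ℚ):ℝ) < g x} := by
      rintro ⟨q1, hq1⟩ ⟨q2, hq2⟩
      refine ⟨⟨min q1 q2, ?_⟩, fun x hx => ?_, fun x hx => ?_⟩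
      · rcases min_choice q1 q2 with h' | h' <;> rw [h']
        exacts [hq1, hq2]
      · exact lt_of_le_of_lt (ENNReal.ofReal_le_ofReal (by exact_mod_cast min_le_left q1 q2)) hx
      · exact lt_of_le_of_lt (ENNReal.ofReal_le_ofReal (by exact_mod_cast min_le_right q1 q2)) hx
    have hbound : ∀ q : {q : ℚ | l < ENNReal.ofReal (q:ℝ)},
        μ {x | ENNReal.ofReal ((q:ℚ):ℝ) < g x} ≤ ENNReal.ofReal s := by
      rintro ⟨q, hq⟩
      have h1 : rearr μ g s < ENNReal.ofReal (q:ℝ) := lt_of_le_of_lt hc hq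
      obtain ⟨l', ⟨_, hl's⟩, hl'q⟩ := sInf_lt_iff.mp h1
      refine le_trans (measure_mono ?_) hl's
      intro x hx
      exact lt_trans hl'q hx
    have hfin : μ {x | l < g x} ≤ ENNReal.ofReal s := by
      rw [key, Directed.measure_iUnion hdir]
      exact iSup_le hbound
    exact absurd h (not_lt.mpr hfin)

lemma rearr_antitone {α : Type*} [MeasurableSpace α] (μ : Measure α) (g : α → ℝ≥0∞) :
    Antitone (rearr μ g) := by
  intro a b hab
  exact sInf_le_sInf fun l hl => ⟨hl.1, hl.2.trans (ENNReal.ofReal_le_ofReal hab)⟩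

lemma rearrP_measurable (g : ℝ → ℝ≥0∞) : Measurable (rearrP g) :=
  (rearr_antitone mP g).measurable

/-- Rational supremum formula for the rearrangement, giving measurability. -/
lemma rearr_eq_iSup {g : ℝ → ℝ≥0∞} (hg : Measurable g) (r : ℝ) :
    rearr mP g r = ⨆ q : ℚ, if 0 < (q:ℝ) ∧
        ENNReal.ofReal r < mP {y | ENNReal.ofReal (q:ℝ) < g y}
      then ENNReal.ofReal (q:ℝ) else 0 := by
  apply le_antisymm
  · refine le_of_forall_lt fun c hc => ?_
    obtain ⟨q, _, h1, h2⟩ := ENNReal.lt_iff_exists_rat_btwn.mp hc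
    have hofq : (Real.toNNReal (q:ℝ) : ℝ≥0∞) = ENNReal.ofReal (q:ℝ) := rfl
    have hq0 : 0 < (q:ℝ) := by
      by_contra hq0
      push_neg at hq0
      rw [hofq] at h1
      simp [ENNReal.ofReal_eq_zero.mpr hq0] at h1
    rw [hofq] at h1 h2
    have hcond : 0 < (q:ℝ) ∧ ENNReal.ofReal r < mP {y | ENNReal.ofReal (q:ℝ) < g y} :=
      ⟨hq0, (lt_rearr_iff hg (ENNReal.ofReal_pos.mpr hq0) ENNReal.ofReal_ne_top r).mp h2⟩
    calc c < ENNReal.ofReal (q:ℝ) := h1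
      _ = if 0 < (q:ℝ) ∧ ENNReal.ofReal r < mP {y | ENNReal.ofReal (q:ℝ) < g y}
            then ENNReal.ofReal (q:ℝ) else 0 := (if_pos hcond).symm
      _ ≤ _ := le_iSup (fun q : ℚ => if 0 < (q:ℝ) ∧
            ENNReal.ofReal r < mP {y | ENNReal.ofReal (q:ℝ) < g y}
          then ENNReal.ofReal (q:ℝ) else 0) q
  · refine iSup_le fun q => ?_
    by_cases hcond : 0 < (q:ℝ) ∧ ENNReal.ofReal r < mP {y | ENNReal.ofReal (q:ℝ) < g y}
    · rw [if_pos hcond]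
      exact ((lt_rearr_iff hg (ENNReal.ofReal_pos.mpr hcond.1) ENNReal.ofReal_ne_top r).mpr
        hcond.2).le
    · rw [if_neg hcond]; exact zero_le

/-- Joint measurability of the rearrangement of a jointly measurable family. -/
lemma measurable_rearr {α : Type*} [MeasurableSpace α] {W : α → ℝ → ℝ≥0∞}
    (hW : Measurable (uncurry W)) :
    Measurable fun p : α × ℝ => rearr mP (W p.1) p.2 := by
  have hWx : ∀ x, Measurable (W x) := fun x => hW.comp measurable_prodMk_left
  have heq : (fun p : α × ℝ => rearr mP (W p.1) p.2) = fun p : α × ℝ =>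
      ⨆ q : ℚ, if 0 < (q:ℝ) ∧
          ENNReal.ofReal p.2 < mP {y | ENNReal.ofReal (q:ℝ) < W p.1 y}
        then ENNReal.ofReal (q:ℝ) else 0 := by
    funext p; exact rearr_eq_iSup (hWx p.1) p.2
  rw [heq]
  refine Measurable.iSup fun q => ?_
  by_cases hq : 0 < (q:ℝ)
  · have hm : Measurable fun x : α => mP {y | ENNReal.ofReal (q:ℝ) < W x y} := by
      have h1 : ∀ x, {y | ENNReal.ofReal (q:ℝ) < W x y}
          = Prod.mk x ⁻¹' {p : α × ℝ | ENNReal.ofReal (q:ℝ) < uncurry W p} := fun x => rfl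
      simp only [h1]
      exact measurable_measure_prodMk_left (measurableSet_lt measurable_const hW)
    have h2 : (fun p : α × ℝ => if 0 < (q:ℝ) ∧
          ENNReal.ofReal p.2 < mP {y | ENNReal.ofReal (q:ℝ) < W p.1 y}
        then ENNReal.ofReal (q:ℝ) else 0)
        = fun p : α × ℝ => if ENNReal.ofReal p.2 < mP {y | ENNReal.ofReal (q:ℝ) < W p.1 y}
          then ENNReal.ofReal (q:ℝ) else 0 := by
      funext p; simp [hq]
    rw [h2]
    exact Measurable.ite (measurableSet_lt (ENNReal.measurable_ofReal.comp measurable_snd)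
      (hm.comp measurable_fst)) measurable_const measurable_const
  · have h2 : (fun p : α × ℝ => if 0 < (q:ℝ) ∧
          ENNReal.ofReal p.2 < mP {y | ENNReal.ofReal (q:ℝ) < W p.1 y}
        then ENNReal.ofReal (q:ℝ) else 0) = fun _ => 0 := by
      funext p; simp [hq]
    rw [h2]; exact measurable_const

lemma vol_lt_ofReal_Ioc (D : ℝ≥0∞) {t : ℝ} (ht : 0 < t) :
    volume ({s : ℝ | ENNReal.ofReal s < D} ∩ Ioc 0 t) = min D (ENNReal.ofReal t) := by
  rcases eq_or_ne D ∞ with rfl | hD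
  · have h : {s : ℝ | ENNReal.ofReal s < ∞} ∩ Ioc 0 t = Ioc 0 t := by
      ext s; simp [ENNReal.ofReal_lt_top]
    rw [h, Real.volume_Ioc, sub_zero, min_eq_right le_top]
  · set d := D.toReal with hd
    have hsub1 : {s : ℝ | ENNReal.ofReal s < D} ∩ Ioc 0 t ⊆ Ioc 0 (min t d) := by
      rintro s ⟨h1, h2, h3⟩
      exact ⟨h2, le_min h3 ((ENNReal.ofReal_lt_iff_lt_toReal h2.le hD).mp h1).le⟩
    have hsub2 : Ioo 0 (min t d) ⊆ {s : ℝ | ENNReal.ofReal s < D} ∩ Ioc 0 t := by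
      rintro s ⟨h1, h2⟩
      exact ⟨(ENNReal.ofReal_lt_iff_lt_toReal h1.le hD).mpr (lt_of_lt_of_le h2 (min_le_right _ _)),
        h1, (lt_of_lt_of_le h2 (min_le_left _ _)).le⟩
    have h1 : volume ({s : ℝ | ENNReal.ofReal s < D} ∩ Ioc 0 t) ≤ volume (Ioc (0:ℝ) (min t d)) :=
      measure_mono hsub1
    have h2 : volume (Ioo (0:ℝ) (min t d)) ≤ volume ({s : ℝ | ENNReal.ofReal s < D} ∩ Ioc 0 t) :=
      measure_mono hsub2
    rw [Real.volume_Ioc, sub_zero] at h1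
    rw [Real.volume_Ioo, sub_zero] at h2
    have heq : volume ({s : ℝ | ENNReal.ofReal s < D} ∩ Ioc 0 t)
        = ENNReal.ofReal (min t d) := le_antisymm h1 h2
    have hmono : Monotone ENNReal.ofReal := fun _ _ h => ENNReal.ofReal_le_ofReal h
    rw [heq, hmono.map_min, hd, ENNReal.ofReal_toReal hD, min_comm]

/-- Layer cake for the truncated integral of the rearrangement. -/
lemma lintegral_rearr_Ioc {W : ℝ → ℝ≥0∞} (hW : Measurable W) {t : ℝ} (ht : 0 < t) :
    ∫⁻ s in Ioc (0:ℝ) t, rearrP W s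
      = ∫⁻ l in Ioi (0:ℝ), min (mP {x | ENNReal.ofReal l < W x}) (ENNReal.ofReal t) := by
  rw [layercake (volume.restrict (Ioc (0:ℝ) t)) (rearrP_measurable W)]
  refine setLIntegral_congr_fun measurableSet_Ioi (fun l hl => ?_)
  have hset : {s : ℝ | ENNReal.ofReal l < rearrP W s}
      = {s : ℝ | ENNReal.ofReal s < mP {x | ENNReal.ofReal l < W x}} := by
    ext s
    exact lt_rearr_iff hW (ENNReal.ofReal_pos.mpr hl) ENNReal.ofReal_ne_top s
  rw [Measure.restrict_apply' measurableSet_Ioc, hset]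
  exact vol_lt_ofReal_Ioc _ ht

/-- Layer cake over a measurable subset of `(0,∞)`. -/
lemma layercake_subset {F : ℝ → ℝ≥0∞} (hF : Measurable F) {E : Set ℝ} (hE : MeasurableSet E) :
    ∫⁻ x in E, F x = ∫⁻ l in Ioi (0:ℝ), volume ({x | ENNReal.ofReal l < F x} ∩ E) := by
  rw [layercake (volume.restrict E) hF]
  exact lintegral_congr fun l => Measure.restrict_apply' hE

/-- Easy half of the Hardy–Littlewood principle: `∫_E W ≤ ∫₀ᵗ W*` when `|E| ≤ t`. -/
lemma setLIntegral_le_rearr {W : ℝ → ℝ≥0∞} (hW : Measurable W) {t : ℝ} (ht : 0 < t)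
    {E : Set ℝ} (hE : MeasurableSet E) (hE0 : E ⊆ Ioi 0)
    (hEt : volume E ≤ ENNReal.ofReal t) :
    ∫⁻ x in E, W x ≤ ∫⁻ s in Ioc (0:ℝ) t, rearrP W s := by
  rw [lintegral_rearr_Ioc hW ht, layercake_subset hW hE]
  refine lintegral_mono fun l => le_min ?_ ?_
  · rw [mP_apply]
    exact measure_mono (inter_subset_inter_right _ hE0)
  · exact le_trans (measure_mono inter_subset_right) hEt

/-- Hardy–Littlewood rearrangement inequality on `(0,∞)`. -/
lemma hardy_littlewood {g h : ℝ → ℝ≥0∞} (hg : Measurable g) (hh : Measurable h) :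
    ∫⁻ y in Ioi (0:ℝ), g y * h y ≤ ∫⁻ s in Ioi (0:ℝ), rearrP g s * rearrP h s := by
  have key : ∀ u v : ℝ → ℝ≥0∞, Measurable u → Measurable v →
      ∫⁻ y, u y * v y ∂mP = ∫⁻ l in Ioi (0:ℝ), ∫⁻ m in Ioi (0:ℝ),
        mP ({y | ENNReal.ofReal m < v y} ∩ {y | ENNReal.ofReal l < u y}) := by
    intro u v hu hv
    have h1 : ∫⁻ y, u y * v y ∂mP = ∫⁻ y, u y ∂(mP.withDensity v) := by
      rw [lintegral_withDensity_eq_lintegral_mul mP hv hu]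
      exact lintegral_congr fun y => mul_comm _ _
    rw [h1, layercake (mP.withDensity v) hu]
    refine lintegral_congr fun l => ?_
    rw [withDensity_apply _ (show MeasurableSet {y | ENNReal.ofReal l < u y}
      from hu measurableSet_Ioi)]
    rw [layercake (mP.restrict {y | ENNReal.ofReal l < u y}) hv]
    refine lintegral_congr fun m => ?_
    exact Measure.restrict_apply' (hu measurableSet_Ioi)
  have hg' : Measurable (rearrP g) := rearrP_measurable g
  have hh' : Measurable (rearrP h) := rearrP_measurable h
  have lhs_eq := key g h hg hh
  have rhs_eq := key (rearrP g) (rearrP h) hg' hh'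
  have hLHS : ∫⁻ y in Ioi (0:ℝ), g y * h y = ∫⁻ y, g y * h y ∂mP := rfl
  have hRHS : ∫⁻ s in Ioi (0:ℝ), rearrP g s * rearrP h s
      = ∫⁻ s, rearrP g s * rearrP h s ∂mP := rfl
  rw [hLHS, hRHS, lhs_eq, rhs_eq]
  refine lintegral_mono_ae ((ae_restrict_iff' measurableSet_Ioi).mpr
    (Filter.Eventually.of_forall fun l hl => ?_))
  refine lintegral_mono_ae ((ae_restrict_iff' measurableSet_Ioi).mpr
    (Filter.Eventually.of_forall fun m hm => ?_))
  have hDh : {s : ℝ | ENNReal.ofReal m < rearrP h s}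
      = {s : ℝ | ENNReal.ofReal s < mP {y | ENNReal.ofReal m < h y}} := by
    ext s; exact lt_rearr_iff hh (ENNReal.ofReal_pos.mpr hm) ENNReal.ofReal_ne_top s
  have hDg : {s : ℝ | ENNReal.ofReal l < rearrP g s}
      = {s : ℝ | ENNReal.ofReal s < mP {y | ENNReal.ofReal l < g y}} := by
    ext s; exact lt_rearr_iff hg (ENNReal.ofReal_pos.mpr hl) ENNReal.ofReal_ne_top s
  have hmin : {s : ℝ | ENNReal.ofReal s < mP {y | ENNReal.ofReal m < h y}}
        ∩ {s : ℝ | ENNReal.ofReal s < mP {y | ENNReal.ofReal l < g y}}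
      = {s : ℝ | ENNReal.ofReal s
          < min (mP {y | ENNReal.ofReal m < h y}) (mP {y | ENNReal.ofReal l < g y})} := by
    ext s; simp [lt_min_iff]
  have hY : mP ({s : ℝ | ENNReal.ofReal m < rearrP h s}
        ∩ {s : ℝ | ENNReal.ofReal l < rearrP g s})
      = min (mP {y | ENNReal.ofReal m < h y}) (mP {y | ENNReal.ofReal l < g y}) := by
    rw [hDh, hDg, hmin, mP_apply, vol_lt_ofReal]
  rw [hY]
  exact le_min (measure_mono inter_subset_left) (measure_mono inter_subset_right)

/-- Choosing a subset of prescribed approximate measure. -/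
lemma exists_subset_measure_between {B : Set ℝ} (hB : MeasurableSet B) (hB0 : B ⊆ Ioi 0)
    {c d : ℝ} (hc : 0 ≤ c) (hd : 0 < d) (hcB : ENNReal.ofReal c ≤ volume B) :
    ∃ B' : Set ℝ, B' ⊆ B ∧ MeasurableSet B' ∧ ENNReal.ofReal c ≤ volume B' ∧
      volume B' ≤ ENNReal.ofReal (c + d) := by
  rcases le_or_gt (volume B) (ENNReal.ofReal (c + d)) with hle | hlt
  · exact ⟨B, subset_rfl, hB, hcB, hle⟩
  rcases eq_or_lt_of_le hc with hc0 | hc0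
  · exact ⟨∅, empty_subset _, MeasurableSet.empty,
      by simp [← hc0], by simp⟩
  have hsup : volume B = ⨆ k : ℕ, volume (B ∩ Iic ((k:ℝ) * d)) := by
    have hU : B = ⋃ k : ℕ, B ∩ Iic ((k:ℝ) * d) := by
      ext x
      simp only [mem_iUnion, mem_inter_iff, mem_Iic]
      constructor
      · intro hx
        obtain ⟨k, hk⟩ := exists_nat_ge (x / d)
        exact ⟨k, hx, (div_le_iff₀ hd).mp hk⟩
      · rintro ⟨k, hx, _⟩; exact hx
    have hdir : Directed (· ⊆ ·) fun k : ℕ => B ∩ Iic ((k:ℝ) * d) := by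
      intro i j
      refine ⟨max i j, inter_subset_inter_right _ (Iic_subset_Iic.mpr ?_),
        inter_subset_inter_right _ (Iic_subset_Iic.mpr ?_)⟩
      · exact mul_le_mul_of_nonneg_right (Nat.cast_le.mpr (le_max_left _ _)) hd.le
      · exact mul_le_mul_of_nonneg_right (Nat.cast_le.mpr (le_max_right _ _)) hd.le
    conv_lhs => rw [hU]
    exact Directed.measure_iUnion hdir
  have hex : ∃ k : ℕ, ENNReal.ofReal c ≤ volume (B ∩ Iic ((k:ℝ) * d)) := by
    by_contra hno
    push_neg at hno
    have hB' : volume B ≤ ENNReal.ofReal c := by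
      rw [hsup]; exact iSup_le fun k => (hno k).le
    exact absurd (hB'.trans (ENNReal.ofReal_le_ofReal (by linarith)))
      (not_le.mpr hlt)
  set k0 := Nat.find hex with hk0def
  have hk0 : ENNReal.ofReal c ≤ volume (B ∩ Iic ((k0:ℝ) * d)) := Nat.find_spec hex
  rcases Nat.eq_zero_or_pos k0 with h0 | hpos
  · exfalso
    have hempty : B ∩ Iic ((k0:ℝ) * d) = ∅ := by
      rw [h0]
      ext x
      simp only [Nat.cast_zero, zero_mul, mem_inter_iff, mem_Iic, mem_empty_iff_false,
        iff_false, not_and, not_le]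
      intro hx
      exact hB0 hx
    rw [hempty, measure_empty] at hk0
    exact absurd (le_antisymm hk0 zero_le) (ENNReal.ofReal_pos.mpr hc0).ne'
  obtain ⟨k1, hk1eq⟩ : ∃ k1, k0 = k1 + 1 := ⟨k0 - 1, by omega⟩
  rw [hk1eq] at hk0
  have hk1 : volume (B ∩ Iic ((k1:ℝ) * d)) < ENNReal.ofReal c := by
    refine not_le.mp (Nat.find_min hex ?_)
    omega
  have hstep : volume (B ∩ Iic (((k1+1:ℕ):ℝ) * d))
      ≤ volume (B ∩ Iic ((k1:ℝ) * d)) + ENNReal.ofReal d := by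
    have hsub : B ∩ Iic (((k1+1:ℕ):ℝ) * d)
        ⊆ (B ∩ Iic ((k1:ℝ) * d)) ∪ Ioc ((k1:ℝ) * d) (((k1+1:ℕ):ℝ) * d) := by
      rintro x ⟨hxB, hx⟩
      rcases le_or_gt x ((k1:ℝ) * d) with hx2 | hx2
      · exact Or.inl ⟨hxB, hx2⟩
      · exact Or.inr ⟨hx2, hx⟩
    refine le_trans (measure_mono hsub) (le_trans (measure_union_le _ _) ?_)
    have : volume (Ioc ((k1:ℝ) * d) (((k1+1:ℕ):ℝ) * d)) = ENNReal.ofReal d := by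
      rw [Real.volume_Ioc]
      congr 1
      push_cast
      ring
    rw [this]
  refine ⟨B ∩ Iic (((k1+1:ℕ):ℝ) * d), inter_subset_left, hB.inter measurableSet_Iic, hk0, ?_⟩
  calc volume (B ∩ Iic (((k1+1:ℕ):ℝ) * d))
      ≤ volume (B ∩ Iic ((k1:ℝ) * d)) + ENNReal.ofReal d := hstep
    _ ≤ ENNReal.ofReal c + ENNReal.ofReal d := add_le_add hk1.le le_rfl
    _ = ENNReal.ofReal (c + d) := (ENNReal.ofReal_add hc hd.le).symm

/-- Hard half of the Hardy–Littlewood principle. -/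
lemma rearr_le_of_forall_subset {F : ℝ → ℝ≥0∞} (hF : Measurable F) {t : ℝ} (ht : 0 < t)
    {M : ℝ≥0∞}
    (hM : ∀ E : Set ℝ, MeasurableSet E → E ⊆ Ioi 0 → volume E ≤ ENNReal.ofReal t →
      ∫⁻ x in E, F x ≤ M) :
    ∫⁻ s in Ioc (0:ℝ) t, rearrP F s ≤ M := by
  rw [lintegral_rearr_Ioc hF ht]
  set D : ℝ → ℝ≥0∞ := fun l => mP {x | ENNReal.ofReal l < F x} with hDdef
  have hDanti : Antitone D := by
    intro x y hxy
    exact measure_mono fun z hz => lt_of_le_of_lt (ENNReal.ofReal_le_ofReal hxy) hz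
  by_cases hcase : ∃ l : ℝ, 0 < l ∧ D l ≤ ENNReal.ofReal t
  swap
  · -- no level set has measure ≤ t : then M = ⊤
    push_neg at hcase
    have hMtop : M = ⊤ := by
      have hbig : ∀ n : ℕ, (n:ℝ≥0∞) * ENNReal.ofReal (t/2) ≤ M := by
        intro n
        have hpos : (0:ℝ) < (n:ℝ) + 1 := by positivity
        have hDn' : ENNReal.ofReal t < D ((n:ℝ)+1) := hcase ((n:ℝ)+1) hpos
        have hBmeas : MeasurableSet ({x | ENNReal.ofReal ((n:ℝ)+1) < F x} ∩ Ioi 0) :=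
          (hF measurableSet_Ioi).inter measurableSet_Ioi
        have hBvol : ENNReal.ofReal (t/2)
            ≤ volume ({x | ENNReal.ofReal ((n:ℝ)+1) < F x} ∩ Ioi 0) := by
          rw [← mP_apply]
          exact le_trans (ENNReal.ofReal_le_ofReal (by linarith)) hDn'.le
        obtain ⟨B', hB'B, hB'meas, hB'lo, hB'hi⟩ := exists_subset_measure_between hBmeas
          inter_subset_right (by positivity) (half_pos ht) hBvol
        have hB'le : volume B' ≤ ENNReal.ofReal t :=
          hB'hi.trans (ENNReal.ofReal_le_ofReal (by linarith))
        have h1 : ∫⁻ x in B', F x ≤ M :=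
          hM B' hB'meas (hB'B.trans inter_subset_right) hB'le
        refine le_trans ?_ h1
        have h2 : ∀ x ∈ B', ENNReal.ofReal ((n:ℝ)+1) ≤ F x := fun x hx => ((hB'B hx).1).le
        calc (n:ℝ≥0∞) * ENNReal.ofReal (t/2)
            ≤ ENNReal.ofReal ((n:ℝ)+1) * volume B' := by
              refine mul_le_mul' ?_ hB'lo
              rw [← ENNReal.ofReal_natCast n]
              exact ENNReal.ofReal_le_ofReal (by linarith)
          _ = ∫⁻ _ in B', ENNReal.ofReal ((n:ℝ)+1) := by
              rw [setLIntegral_const, mul_comm]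
          _ ≤ ∫⁻ x in B', F x := setLIntegral_mono' hB'meas h2
      have h4 : (⨆ n : ℕ, (n:ℝ≥0∞)) * ENNReal.ofReal (t/2) ≤ M := by
        rw [ENNReal.iSup_mul]
        exact iSup_le hbig
      rw [ENNReal.iSup_natCast, ENNReal.top_mul
        (ENNReal.ofReal_pos.mpr (half_pos ht)).ne'] at h4
      exact top_unique h4
    rw [hMtop]; exact le_top
  · have hSne : {l : ℝ | 0 < l ∧ D l ≤ ENNReal.ofReal t}.Nonempty := hcase
    have hSbdd : BddBelow {l : ℝ | 0 < l ∧ D l ≤ ENNReal.ofReal t} :=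
      ⟨0, fun l hl => hl.1.le⟩
    set lam := sInf {l : ℝ | 0 < l ∧ D l ≤ ENNReal.ofReal t} with hlamdef
    have hlam0 : 0 ≤ lam := le_csInf hSne fun l hl => hl.1.le
    have ha : ∀ l : ℝ, lam < l → D l ≤ ENNReal.ofReal t := by
      intro l hl
      obtain ⟨l', hl'S, hl'l⟩ := (csInf_lt_iff hSbdd hSne).mp hl
      exact le_trans (hDanti hl'l.le) hl'S.2
    have hb : ∀ l : ℝ, 0 < l → l < lam → ENNReal.ofReal t < D l := by
      intro l hl0 hllam
      by_contra hcon
      push_neg at hcon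
      exact absurd (csInf_le hSbdd ⟨hl0, hcon⟩) (not_le.mpr hllam)
    set A := {x | ENNReal.ofReal lam < F x} ∩ Ioi 0 with hAdef
    have hAmeas : MeasurableSet A := (hF measurableSet_Ioi).inter measurableSet_Ioi
    have hAsub : A ⊆ Ioi 0 := inter_subset_right
    have hAvol : volume A ≤ ENNReal.ofReal t := by
      have hU : A = ⋃ n : ℕ, ({x | ENNReal.ofReal (lam + 1/((n:ℝ)+1)) < F x} ∩ Ioi 0) := by
        ext x
        simp only [hAdef, mem_iUnion, mem_inter_iff, mem_setOf_eq, mem_Ioi]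
        constructor
        · rintro ⟨hx, hx0⟩
          obtain ⟨r, hr0, hr1, hr2⟩ := ENNReal.lt_iff_exists_real_btwn.mp hx
          have hlamr : lam < r := by
            by_contra hcon
            push_neg at hcon
            exact absurd (ENNReal.ofReal_le_ofReal hcon) (not_le.mpr hr1)
          obtain ⟨n, hn⟩ := exists_nat_one_div_lt (sub_pos.mpr hlamr)
          exact ⟨n, lt_of_le_of_lt (ENNReal.ofReal_le_ofReal (by linarith)) hr2, hx0⟩
        · rintro ⟨n, hx, hx0⟩
          have h1n : (0:ℝ) < 1/((n:ℝ)+1) := by positivity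
          exact ⟨lt_of_le_of_lt (ENNReal.ofReal_le_ofReal (by linarith)) hx, hx0⟩
      have hdir : Directed (· ⊆ ·) fun n : ℕ =>
          ({x | ENNReal.ofReal (lam + 1/((n:ℝ)+1)) < F x} ∩ Ioi 0) := by
        intro i j
        have hmaxi : (1:ℝ)/(((max i j : ℕ):ℝ)+1) ≤ 1/((i:ℝ)+1) := by
          gcongr
          exact_mod_cast le_max_left i j
        have hmaxj : (1:ℝ)/(((max i j : ℕ):ℝ)+1) ≤ 1/((j:ℝ)+1) := by
          gcongr
          exact_mod_cast le_max_right i j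
        exact ⟨max i j,
          fun x hx => ⟨lt_of_le_of_lt (ENNReal.ofReal_le_ofReal (by linarith)) hx.1, hx.2⟩,
          fun x hx => ⟨lt_of_le_of_lt (ENNReal.ofReal_le_ofReal (by linarith)) hx.1, hx.2⟩⟩
      rw [hU, Directed.measure_iUnion hdir]
      refine iSup_le fun n => ?_
      have h1n : lam < lam + 1/((n:ℝ)+1) := by
        have : (0:ℝ) < 1/((n:ℝ)+1) := by positivity
        linarith
      have h2 := ha _ h1n
      simp only [hDdef] at h2
      rwa [mP_apply] at h2
    rcases le_or_gt lam 0 with hlam_le | hlam_pos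
    · -- lam = 0 : take E = A
      have key : ∫⁻ l in Ioi (0:ℝ), min (D l) (ENNReal.ofReal t) ≤ ∫⁻ x in A, F x := by
        rw [layercake_subset hF hAmeas]
        refine lintegral_mono_ae ((ae_restrict_iff' measurableSet_Ioi).mpr
          (Filter.Eventually.of_forall fun l hl => ?_))
        have hseteq : {x | ENNReal.ofReal l < F x} ∩ A
            = {x | ENNReal.ofReal l < F x} ∩ Ioi 0 := by
          ext x
          simp only [hAdef, mem_inter_iff, mem_setOf_eq, mem_Ioi]
          constructor
          · rintro ⟨h1, _, h3⟩; exact ⟨h1, h3⟩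
          · rintro ⟨h1, h2⟩
            refine ⟨h1, lt_of_le_of_lt (ENNReal.ofReal_le_ofReal ?_) h1, h2⟩
            have hl' : (0:ℝ) < l := hl
            linarith
        rw [hseteq, ← mP_apply]
        exact min_le_left _ _
      exact key.trans (hM A hAmeas hAsub hAvol)
    · -- lam > 0
      have main : ∀ v : ℝ, 0 < v → v < t →
          ∫⁻ l in Ioi (0:ℝ), min (D l) (ENNReal.ofReal v) ≤ M := by
        intro v hv0 hvt
        rcases le_or_gt (ENNReal.ofReal v) (volume A) with hAv | hAv
        · have key : ∫⁻ l in Ioi (0:ℝ), min (D l) (ENNReal.ofReal v) ≤ ∫⁻ x in A, F x := by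
            rw [layercake_subset hF hAmeas]
            refine lintegral_mono_ae ((ae_restrict_iff' measurableSet_Ioi).mpr
              (Filter.Eventually.of_forall fun l hl => ?_))
            rcases le_or_gt lam l with hll | hll
            · have hseteq : {x | ENNReal.ofReal l < F x} ∩ A
                  = {x | ENNReal.ofReal l < F x} ∩ Ioi 0 := by
                ext x
                simp only [hAdef, mem_inter_iff, mem_setOf_eq, mem_Ioi]
                constructor
                · rintro ⟨h1, _, h3⟩; exact ⟨h1, h3⟩
                · rintro ⟨h1, h2⟩
                  exact ⟨h1, lt_of_le_of_lt (ENNReal.ofReal_le_ofReal hll) h1, h2⟩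
              rw [hseteq, ← mP_apply]
              exact min_le_left _ _
            · have hsub : A ⊆ {x | ENNReal.ofReal l < F x} := fun x hx =>
                lt_of_le_of_lt (ENNReal.ofReal_le_ofReal hll.le) hx.1
              rw [inter_eq_self_of_subset_right hsub]
              exact le_trans (min_le_right _ _) hAv
          exact key.trans (hM A hAmeas hAsub hAvol)
        · -- volume A < ofReal v
          refine ENNReal.le_of_forall_pos_le_add fun ε hε hMfin => ?_
          have hε0 : (0:ℝ) < (ε:ℝ) := hε
          set δ := min (lam/2) ((ε:ℝ)/(v+1)) with hδdef
          have hδ0 : 0 < δ := lt_min (by linarith) (div_pos hε0 (by linarith))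
          have hδlam : δ < lam := lt_of_le_of_lt (min_le_left _ _) (by linarith)
          set l₁ := lam - δ with hl₁def
          have hl₁0 : 0 < l₁ := by simp only [hl₁def]; linarith
          have hl₁lam : l₁ < lam := by simp only [hl₁def]; linarith
          set B := {x | ENNReal.ofReal l₁ < F x ∧ F x ≤ ENNReal.ofReal lam} ∩ Ioi 0 with hBdef
          have hBmeas : MeasurableSet B :=
            ((measurableSet_lt measurable_const hF).inter
              (measurableSet_le hF measurable_const)).inter measurableSet_Ioi
          have hABdisj : Disjoint A B := by
            rw [Set.disjoint_left]
            rintro x ⟨hx1, _⟩ ⟨⟨_, hx2⟩, _⟩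
            exact absurd hx1 (not_lt.mpr hx2)
          have hABunion : A ∪ B = {x | ENNReal.ofReal l₁ < F x} ∩ Ioi 0 := by
            ext x
            simp only [hAdef, hBdef, mem_union, mem_inter_iff, mem_setOf_eq, mem_Ioi]
            constructor
            · rintro (⟨hx, hx0⟩ | ⟨⟨hx, _⟩, hx0⟩)
              · exact ⟨lt_of_le_of_lt (ENNReal.ofReal_le_ofReal hl₁lam.le) hx, hx0⟩
              · exact ⟨hx, hx0⟩
            · rintro ⟨hx, hx0⟩
              rcases le_or_gt (F x) (ENNReal.ofReal lam) with h' | h'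
              · exact Or.inr ⟨⟨hx, h'⟩, hx0⟩
              · exact Or.inl ⟨h', hx0⟩
          have hvAne : volume A ≠ ⊤ := hAv.ne_top
          set a := (volume A).toReal with hadef
          have hae : ENNReal.ofReal a = volume A := ENNReal.ofReal_toReal hvAne
          have hav : a < v := by
            rw [← hae] at hAv
            exact (ENNReal.ofReal_lt_ofReal_iff hv0).mp hAv
          have ha0 : 0 ≤ a := ENNReal.toReal_nonneg
          have hDl₁ : ENNReal.ofReal t < volume (A ∪ B) := by
            rw [hABunion, ← mP_apply]
            exact hb l₁ hl₁0 hl₁lam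
          have hvolAB : volume (A ∪ B) = volume A + volume B :=
            measure_union hABdisj hBmeas
          have hBlow : ENNReal.ofReal (v - a) ≤ volume B := by
            have h1 : ENNReal.ofReal v ≤ volume A + volume B := by
              rw [← hvolAB]
              exact le_trans (ENNReal.ofReal_le_ofReal hvt.le) hDl₁.le
            rw [ENNReal.ofReal_sub _ ha0, hae]
            exact tsub_le_iff_left.mpr h1
          obtain ⟨B', hB'B, hB'meas, hB'lo, hB'hi⟩ :=
            exists_subset_measure_between hBmeas
              (show B ⊆ Ioi 0 from inter_subset_right)
              (by linarith : (0:ℝ) ≤ v - a) (by linarith : (0:ℝ) < t - v) hBlow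
          set E := A ∪ B' with hEdef
          have hEmeas : MeasurableSet E := hAmeas.union hB'meas
          have hEsub : E ⊆ Ioi 0 := union_subset hAsub (hB'B.trans inter_subset_right)
          have hEdisj : Disjoint A B' := hABdisj.mono_right hB'B
          have hEvol : volume E = volume A + volume B' := measure_union hEdisj hB'meas
          have hEt : volume E ≤ ENNReal.ofReal t := by
            rw [hEvol]
            calc volume A + volume B'
                ≤ ENNReal.ofReal a + ENNReal.ofReal (v - a + (t - v)) :=
                  add_le_add hae.ge hB'hi
              _ = ENNReal.ofReal (a + (v - a + (t - v))) :=
                  (ENNReal.ofReal_add ha0 (by linarith)).symm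
              _ = ENNReal.ofReal t := by congr 1; ring
          have hEv : ENNReal.ofReal v ≤ volume E := by
            rw [hEvol]
            calc ENNReal.ofReal v = ENNReal.ofReal (a + (v - a)) := by congr 1; ring
              _ = ENNReal.ofReal a + ENNReal.ofReal (v - a) :=
                  ENNReal.ofReal_add ha0 (by linarith)
              _ ≤ volume A + volume B' := add_le_add hae.le hB'lo
          have hpoint : ∀ l ∈ Ioi (0:ℝ), min (D l) (ENNReal.ofReal v)
              ≤ volume ({x | ENNReal.ofReal l < F x} ∩ E)
                + (Ioc l₁ lam).indicator (fun _ => ENNReal.ofReal v) l := by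
            intro l hl
            rcases le_or_gt l l₁ with h1 | h1
            · have hsub : E ⊆ {x | ENNReal.ofReal l < F x} := by
                rintro x (hx | hx)
                · exact lt_of_le_of_lt (ENNReal.ofReal_le_ofReal (by linarith)) hx.1
                · exact lt_of_le_of_lt (ENNReal.ofReal_le_ofReal h1) (hB'B hx).1.1
              rw [inter_eq_self_of_subset_right hsub]
              exact le_trans (le_trans (min_le_right _ _) hEv) le_self_add
            rcases le_or_gt l lam with h2 | h2
            · have hind : (Ioc l₁ lam).indicator (fun _ => ENNReal.ofReal v) l
                  = ENNReal.ofReal v :=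
                indicator_of_mem (show l ∈ Ioc l₁ lam from ⟨h1, h2⟩) _
              rw [hind]
              exact le_trans (min_le_right _ _) le_add_self
            · have hseteq : {x | ENNReal.ofReal l < F x} ∩ E
                  = {x | ENNReal.ofReal l < F x} ∩ Ioi 0 := by
                ext x
                constructor
                · rintro ⟨hx1, hx2⟩; exact ⟨hx1, hEsub hx2⟩
                · rintro ⟨hx1, hx2⟩
                  refine ⟨hx1, Or.inl ⟨lt_of_le_of_lt (ENNReal.ofReal_le_ofReal h2.le) hx1, hx2⟩⟩
              rw [hseteq, ← mP_apply]
              exact le_trans (min_le_left _ _) le_self_add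
          have hI : ∫⁻ l in Ioi (0:ℝ), min (D l) (ENNReal.ofReal v)
              ≤ (∫⁻ l in Ioi (0:ℝ), volume ({x | ENNReal.ofReal l < F x} ∩ E))
                + ∫⁻ l in Ioi (0:ℝ), (Ioc l₁ lam).indicator (fun _ => ENNReal.ofReal v) l := by
            refine le_trans (lintegral_mono_ae ((ae_restrict_iff' measurableSet_Ioi).mpr
              (Filter.Eventually.of_forall hpoint))) ?_
            rw [lintegral_add_right _ (measurable_const.indicator measurableSet_Ioc)]
          have hT1 : ∫⁻ l in Ioi (0:ℝ), volume ({x | ENNReal.ofReal l < F x} ∩ E) ≤ M := by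
            rw [← layercake_subset hF hEmeas]
            exact hM E hEmeas hEsub hEt
          have hT2 : ∫⁻ l in Ioi (0:ℝ), (Ioc l₁ lam).indicator (fun _ => ENNReal.ofReal v) l
              ≤ ENNReal.ofReal v * ENNReal.ofReal δ := by
            rw [lintegral_indicator measurableSet_Ioc, setLIntegral_const,
              Measure.restrict_apply' (show MeasurableSet (Ioi (0:ℝ)) from measurableSet_Ioi)]
            refine mul_le_mul_right ?_ _
            refine le_trans (measure_mono inter_subset_left) ?_
            rw [Real.volume_Ioc]
            refine ENNReal.ofReal_le_ofReal ?_
            simp only [hl₁def]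
            linarith
          refine le_trans (hI.trans (add_le_add hT1 hT2)) (add_le_add le_rfl ?_)
          rw [← ENNReal.ofReal_mul hv0.le]
          calc ENNReal.ofReal (v * δ) ≤ ENNReal.ofReal (ε:ℝ) := by
                refine ENNReal.ofReal_le_ofReal ?_
                have hδ2 : δ ≤ (ε:ℝ)/(v+1) := min_le_right _ _
                have h1 : v * δ ≤ v * ((ε:ℝ)/(v+1)) :=
                  mul_le_mul_of_nonneg_left hδ2 hv0.le
                have h2 : v * ((ε:ℝ)/(v+1)) ≤ (ε:ℝ) := by
                  rw [mul_comm, div_mul_eq_mul_div, div_le_iff₀ (by linarith : (0:ℝ) < v+1)]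
                  nlinarith
                linarith
            _ = (ε:ℝ≥0∞) := ENNReal.ofReal_coe_nnreal
      -- monotone convergence in v
      have hv0 : ∀ n : ℕ, 0 < t - t/((n:ℝ)+2) := by
        intro n
        have h1 : t/((n:ℝ)+2) < t := by
          apply div_lt_self ht
          have : (0:ℝ) ≤ (n:ℝ) := Nat.cast_nonneg n
          linarith
        linarith
      have hvt : ∀ n : ℕ, t - t/((n:ℝ)+2) < t := by
        intro n
        have h1 : 0 < t/((n:ℝ)+2) := div_pos ht (by positivity)
        linarith
      have hmono : Monotone fun n : ℕ => ENNReal.ofReal (t - t/((n:ℝ)+2)) := by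
        intro i j hij
        refine ENNReal.ofReal_le_ofReal ?_
        have h2 : t/((j:ℝ)+2) ≤ t/((i:ℝ)+2) := by gcongr
        linarith
      have hsupv : (⨆ n : ℕ, ENNReal.ofReal (t - t/((n:ℝ)+2))) = ENNReal.ofReal t := by
        apply le_antisymm
        · exact iSup_le fun n => ENNReal.ofReal_le_ofReal (hvt n).le
        · refine ENNReal.le_of_forall_pos_le_add fun ε hε hfin => ?_
          have hε0 : (0:ℝ) < (ε:ℝ) := hε
          obtain ⟨n, hn⟩ := exists_nat_gt (t/(ε:ℝ))
          have hkey : t/((n:ℝ)+2) ≤ (ε:ℝ) := by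
            rw [div_le_iff₀ (by positivity : (0:ℝ) < (n:ℝ)+2)]
            rw [div_lt_iff₀ hε0] at hn
            nlinarith [hε0.le, (Nat.cast_nonneg n : (0:ℝ) ≤ (n:ℝ))]
          calc ENNReal.ofReal t
              = ENNReal.ofReal ((t - t/((n:ℝ)+2)) + t/((n:ℝ)+2)) := by congr 1; ring
            _ ≤ ENNReal.ofReal (t - t/((n:ℝ)+2)) + ENNReal.ofReal (t/((n:ℝ)+2)) :=
                ENNReal.ofReal_add_le
            _ ≤ (⨆ m : ℕ, ENNReal.ofReal (t - t/((m:ℝ)+2))) + (ε:ℝ≥0∞) := by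
                refine add_le_add (le_iSup (fun m : ℕ => ENNReal.ofReal (t - t/((m:ℝ)+2))) n) ?_
                rw [← ENNReal.ofReal_coe_nnreal]
                exact ENNReal.ofReal_le_ofReal hkey
      have hDmeas : Measurable D := hDanti.measurable
      have hmct : ∫⁻ l in Ioi (0:ℝ), min (D l) (ENNReal.ofReal t)
          = ⨆ n : ℕ, ∫⁻ l in Ioi (0:ℝ), min (D l) (ENNReal.ofReal (t - t/((n:ℝ)+2))) := by
        rw [← lintegral_iSup (fun n => hDmeas.min measurable_const)
          (fun i j hij l => min_le_min le_rfl (hmono hij))]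
        refine lintegral_congr fun l => ?_
        rw [← hsupv, inf_iSup_eq]
      rw [hmct]
      exact iSup_le fun n => main _ (hv0 n) (hvt n)

end Stmt10Aux

set_option maxHeartbeats 1000000 in
/-- `∫₀ᵗ (T_K f)* ≤ ∫₀ᵗ T_L f*`, where `L` is the iterated
rearrangement of `K`; equivalently `(T_K f)**(t) ≤ (T_L f*)**(t)`. -/
theorem statement_10 (K : ℝ → ℝ → ℝ≥0∞) (hK : Measurable (uncurry K))
    (f : ℝ → ℝ≥0∞) (hf : Measurable f) (t : ℝ) (ht : 0 < t) :
    ∫⁻ s in Ioc (0:ℝ) t, rearrP (TK K f) s ≤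
      ∫⁻ s in Ioc (0:ℝ) t, ∫⁻ r in Ioi (0:ℝ), iterRearr K s r * rearrP f r := by
  have hf' : Measurable (rearrP f) := rearrP_measurable f
  have hKx : ∀ x, Measurable (K x) := fun x => hK.comp measurable_prodMk_left
  -- joint measurability of G (x,r) = (K x)*(r)
  have hG : Measurable fun p : ℝ × ℝ => rearrP (K p.1) p.2 := by
    have h := measurable_rearr hK
    exact h
  -- joint measurability of L as function of (r,s)
  have hL : Measurable fun p : ℝ × ℝ => iterRearr K p.2 p.1 := by
    have hW : Measurable (uncurry fun (r : ℝ) (x : ℝ) => rearrP (K x) r) := by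
      have h := hG.comp (measurable_swap (α := ℝ) (β := ℝ))
      exact h
    have h2 := measurable_rearr hW
    exact h2
  -- measurability of T_K f
  have hTK : Measurable (TK K f) := by
    have h1 : Measurable (fun p : ℝ × ℝ => K p.1 p.2 * f p.2) :=
      hK.mul (hf.comp measurable_snd)
    exact h1.lintegral_prod_right'
  -- F x := ∫ (K x)*(r) f*(r) dr
  set F : ℝ → ℝ≥0∞ := fun x => ∫⁻ r in Ioi (0:ℝ), rearrP (K x) r * rearrP f r with hFdef
  have hF : Measurable F := by
    have h1 : Measurable (fun p : ℝ × ℝ => rearrP (K p.1) p.2 * rearrP f p.2) :=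
      hG.mul (hf'.comp measurable_snd)
    exact h1.lintegral_prod_right'
  -- pointwise Hardy–Littlewood bound
  have hTKF : ∀ x, TK K f x ≤ F x := fun x => hardy_littlewood (hKx x) hf
  -- the bound M
  set M : ℝ≥0∞ := ∫⁻ r in Ioi (0:ℝ),
    (∫⁻ s in Ioc (0:ℝ) t, iterRearr K s r) * rearrP f r with hMdef
  -- every admissible E has ∫_E F ≤ M
  have hME : ∀ E : Set ℝ, MeasurableSet E → E ⊆ Ioi 0 → volume E ≤ ENNReal.ofReal t →
      ∫⁻ x in E, F x ≤ M := by
    intro E hE hE0 hEt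
    have hswap : ∫⁻ x in E, F x
        = ∫⁻ r in Ioi (0:ℝ), ∫⁻ x in E, rearrP (K x) r * rearrP f r := by
      refine lintegral_lintegral_swap ?_
      exact (hG.mul (hf'.comp measurable_snd)).aemeasurable
    rw [hswap]
    refine lintegral_mono fun r => ?_
    have hmeas1 : Measurable fun x => rearrP (K x) r := by
      have h := hG.comp ((measurable_id (α := ℝ)).prodMk (measurable_const (a := r)))
      exact h
    rw [lintegral_mul_const _ hmeas1]
    refine mul_le_mul' ?_ le_rfl
    exact setLIntegral_le_rearr hmeas1 ht hE hE0 hEt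
  calc ∫⁻ s in Ioc (0:ℝ) t, rearrP (TK K f) s
      = ∫⁻ l in Ioi (0:ℝ), min (mP {x | ENNReal.ofReal l < TK K f x}) (ENNReal.ofReal t) :=
        lintegral_rearr_Ioc hTK ht
    _ ≤ ∫⁻ l in Ioi (0:ℝ), min (mP {x | ENNReal.ofReal l < F x}) (ENNReal.ofReal t) := by
        refine lintegral_mono fun l => min_le_min ?_ le_rfl
        exact measure_mono fun x hx => lt_of_lt_of_le hx (hTKF x)
    _ = ∫⁻ s in Ioc (0:ℝ) t, rearrP F s := (lintegral_rearr_Ioc hF ht).symm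
    _ ≤ M := rearr_le_of_forall_subset hF ht hME
    _ = ∫⁻ r in Ioi (0:ℝ), ∫⁻ s in Ioc (0:ℝ) t, iterRearr K s r * rearrP f r := by
        refine lintegral_congr fun r => ?_
        exact (lintegral_mul_const _ (rearr_antitone mP _).measurable).symm
    _ = ∫⁻ s in Ioc (0:ℝ) t, ∫⁻ r in Ioi (0:ℝ), iterRearr K s r * rearrP f r := by
        refine lintegral_lintegral_swap ?_
        exact (hL.mul (hf'.comp measurable_fst)).aemeasurable

end
end

section
/- (Theorem 11, second growth condition) Let k : (0,∞) → [0,∞) be nonincreasing and define M₂(y,x) = ∫₀^{1/x} k(1/y + s) ds for x, y > 0. Then for all 0 < x < z < y one has M₂(y,x) ≤ M₂(y,z) + M₂(z,x). -/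
open MeasureTheory Set Function
open scoped ENNReal

noncomputable section

/-- Theorem 11, second growth condition: for nonincreasing
`k : (0,∞) → [0,∞)` and `M₂(y,x) = ∫₀^{1/x} k(1/y+s) ds`, one has
`M₂(y,x) ≤ M₂(y,z) + M₂(z,x)` for `0 < x < z < y`. -/
theorem statement_15 (k : ℝ → ℝ) (hk : AntitoneOn k (Ioi 0))
    (hk0 : ∀ t > (0:ℝ), 0 ≤ k t)
    (x y z : ℝ) (hx : 0 < x) (hxz : x < z) (hzy : z < y) :
    (∫⁻ s in Ioc (0:ℝ) (1 / x), ENNReal.ofReal (k (1 / y + s))) ≤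
      (∫⁻ s in Ioc (0:ℝ) (1 / z), ENNReal.ofReal (k (1 / y + s))) +
        ∫⁻ s in Ioc (0:ℝ) (1 / x), ENNReal.ofReal (k (1 / z + s)) := by
  have hz : 0 < z := hx.trans hxz
  have hy : 0 < y := hz.trans hzy
  have hzx : (1:ℝ)/z ≤ 1/x := one_div_le_one_div_of_le hx hxz.le
  have hsplit : Ioc (0:ℝ) (1/x) = Ioc 0 (1/z) ∪ Ioc (1/z) (1/x) :=
    (Ioc_union_Ioc_eq_Ioc (by positivity) hzx).symm
  conv_lhs => rw [hsplit, lintegral_union measurableSet_Ioc (Ioc_disjoint_Ioc_of_le le_rfl)]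
  refine add_le_add le_rfl ?_
  -- tail bound
  have step1 : (∫⁻ s in Ioc (1/z) (1/x), ENNReal.ofReal (k (1 / y + s))) ≤
      ∫⁻ s in Ioc (1/z) (1/x), ENNReal.ofReal (k s) := by
    refine lintegral_mono_ae ((ae_restrict_iff' measurableSet_Ioc).2 (ae_of_all _ ?_))
    intro s hs
    have hs0 : 0 < s := lt_trans (by positivity) hs.1
    exact ENNReal.ofReal_le_ofReal (hk hs0 (by simp [mem_Ioi]; positivity)
      (by linarith [one_div_pos.2 hy]))
  have step2 : (∫⁻ s in Ioc (1/z) (1/x), ENNReal.ofReal (k s)) =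
      ∫⁻ t in Ioc 0 (1/x - 1/z), ENNReal.ofReal (k (1/z + t)) := by
    rw [← lintegral_indicator measurableSet_Ioc, ← lintegral_indicator measurableSet_Ioc]
    rw [← lintegral_add_right_eq_self
      (fun s => (Ioc (1/z) (1/x)).indicator (fun s => ENNReal.ofReal (k s)) s) (1/z)]
    refine lintegral_congr fun t => ?_
    by_cases ht : t ∈ Ioc (0:ℝ) (1/x - 1/z)
    · have : t + 1/z ∈ Ioc (1/z) (1/x) := by
        obtain ⟨h1, h2⟩ := ht; constructor <;> [linarith; linarith]
      rw [indicator_of_mem this, indicator_of_mem ht, add_comm]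
    · have : t + 1/z ∉ Ioc (1/z) (1/x) := by
        intro h; exact ht ⟨by linarith [h.1], by linarith [h.2]⟩
      rw [indicator_of_notMem this, indicator_of_notMem ht]
  have step3 : (∫⁻ t in Ioc (0:ℝ) (1/x - 1/z), ENNReal.ofReal (k (1/z + t))) ≤
      ∫⁻ t in Ioc (0:ℝ) (1/x), ENNReal.ofReal (k (1/z + t)) :=
    lintegral_mono_set (Ioc_subset_Ioc_right (by linarith [one_div_pos.2 hz]))
  exact step1.trans (step2 ▸ step3)

end
end

section
/- Let k : (0,∞) → [0,∞) be nonincreasing and let K(x,y) = k(√(x²+y²)). Then the kernels M₁(x,y) = ∫₀ˣ k(√(y²+z²)) dz and M₂(y,x) = ∫₀^{1/x} k(√(y⁻²+z²)) dz satisfy the growth conditions: M₁(x,y) ≤ M₁(z,y) + M₁(x,z) for all 0 < y < z < x, and M₂(y,x) ≤ M₂(y,z) + M₂(z,x) for all 0 < x < z < y. -/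
open MeasureTheory Set Function
open scoped ENNReal

noncomputable section

lemma key_growth (k : ℝ → ℝ) (hk : AntitoneOn k (Ioi 0))
    (hk0 : ∀ t > (0:ℝ), 0 ≤ k t) :
    ∀ x y z : ℝ, 0 < y → y < z → z < x →
      (∫⁻ w in Ioc (0:ℝ) x, ENNReal.ofReal (k (Real.sqrt (y ^ 2 + w ^ 2)))) ≤
        (∫⁻ w in Ioc (0:ℝ) z, ENNReal.ofReal (k (Real.sqrt (y ^ 2 + w ^ 2)))) +
          ∫⁻ w in Ioc (0:ℝ) x, ENNReal.ofReal (k (Real.sqrt (z ^ 2 + w ^ 2))) := by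
  intro x y z hy hyz hzx
  have hz : (0:ℝ) < z := hy.trans hyz
  have hsplit : (∫⁻ w in Ioc (0:ℝ) x, ENNReal.ofReal (k (Real.sqrt (y ^ 2 + w ^ 2)))) =
      (∫⁻ w in Ioc (0:ℝ) z, ENNReal.ofReal (k (Real.sqrt (y ^ 2 + w ^ 2)))) +
        ∫⁻ w in Ioc z x, ENNReal.ofReal (k (Real.sqrt (y ^ 2 + w ^ 2))) := by
    rw [← lintegral_union measurableSet_Ioc (Set.Ioc_disjoint_Ioc_of_le le_rfl),
      Set.Ioc_union_Ioc_eq_Ioc hz.le hzx.le]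
  rw [hsplit]
  refine add_le_add le_rfl ?_
  -- compare pointwise on (z, x]
  have step1 : (∫⁻ w in Ioc z x, ENNReal.ofReal (k (Real.sqrt (y ^ 2 + w ^ 2)))) ≤
      ∫⁻ w in Ioc z x, ENNReal.ofReal (k (Real.sqrt (z ^ 2 + (w - z) ^ 2))) := by
    refine setLIntegral_mono' measurableSet_Ioc ?_
    intro w hw
    refine ENNReal.ofReal_le_ofReal ?_
    have hw1 : z < w := hw.1
    have h1 : (0:ℝ) < Real.sqrt (z ^ 2 + (w - z) ^ 2) := by
      apply Real.sqrt_pos.2; nlinarith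
    have h2 : Real.sqrt (z ^ 2 + (w - z) ^ 2) ≤ Real.sqrt (y ^ 2 + w ^ 2) := by
      apply Real.sqrt_le_sqrt; nlinarith
    exact hk (mem_Ioi.2 h1) (mem_Ioi.2 (h1.trans_le h2)) h2
  refine step1.trans ?_
  -- translate
  have := (measurePreserving_add_right (volume : Measure ℝ) z).setLIntegral_comp_preimage_emb
      (measurableEmbedding_addRight z)
      (fun w => ENNReal.ofReal (k (Real.sqrt (z ^ 2 + (w - z) ^ 2)))) (Ioc z x)
  have hpre : (fun w => w + z) ⁻¹' Ioc z x = Ioc 0 (x - z) := by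
    ext w
    simp only [Set.mem_preimage, Set.mem_Ioc]
    constructor <;> intro h <;> exact ⟨by linarith [h.1], by linarith [h.2]⟩
  rw [hpre] at this
  rw [← this]
  simp only [add_sub_cancel_right]
  refine le_trans (lintegral_mono_set (Set.Ioc_subset_Ioc_right (by linarith))) le_rfl

/-- growth conditions for the Hardy-type kernels associated with
`K(x,y) = k(√(x²+y²))`, `k` nonincreasing. -/
theorem statement_17 (k : ℝ → ℝ) (hk : AntitoneOn k (Ioi 0))
    (hk0 : ∀ t > (0:ℝ), 0 ≤ k t) :
    (∀ x y z : ℝ, 0 < y → y < z → z < x →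
      (∫⁻ w in Ioc (0:ℝ) x, ENNReal.ofReal (k (Real.sqrt (y ^ 2 + w ^ 2)))) ≤
        (∫⁻ w in Ioc (0:ℝ) z, ENNReal.ofReal (k (Real.sqrt (y ^ 2 + w ^ 2)))) +
          ∫⁻ w in Ioc (0:ℝ) x, ENNReal.ofReal (k (Real.sqrt (z ^ 2 + w ^ 2)))) ∧
    (∀ x y z : ℝ, 0 < x → x < z → z < y →
      (∫⁻ w in Ioc (0:ℝ) x⁻¹, ENNReal.ofReal (k (Real.sqrt (y⁻¹ ^ 2 + w ^ 2)))) ≤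
        (∫⁻ w in Ioc (0:ℝ) z⁻¹, ENNReal.ofReal (k (Real.sqrt (y⁻¹ ^ 2 + w ^ 2)))) +
          ∫⁻ w in Ioc (0:ℝ) x⁻¹, ENNReal.ofReal (k (Real.sqrt (z⁻¹ ^ 2 + w ^ 2)))) := by
  constructor
  · exact key_growth k hk hk0
  · intro x y z hx hxz hzy
    have hz : (0:ℝ) < z := hx.trans hxz
    have hy : (0:ℝ) < y := hz.trans hzy
    exact key_growth k hk hk0 x⁻¹ y⁻¹ z⁻¹ (inv_pos.2 hy)
      ((inv_lt_inv₀ hy hz).2 hzy) ((inv_lt_inv₀ hz hx).2 hxz)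


end
end
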